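/- Define f_k(t) for the discrete Schrödinger equation with h-mesh and initial datum f_k(0) = I_k(i/(2h²))/I_0(5/(2h²)). Then f_k(1) = e^{−2i/h²} I_k(5i/(2h²))/I_0(5/(2h²)), and hence |f_k(0)| ≤ I_k(1/(2h²))/I_0(1/(2h²)) and |f_k(1)| ≤ I_k(5/(2h²))/I_0(5/(2h²)). -/

import Mathlib

open MeasureTheory

/-- Modified Bessel function of integer order `k`, complex argument:
`I_k(z) = (1/π) ∫₀^π e^{z cos θ} cos(kθ) dθ`. -/
noncomputable def besselI (k : ℤ) (z : ℂ) : ℂ :=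
  (1 / (Real.pi : ℂ)) * ∫ θ in (0:ℝ)..Real.pi, Complex.exp (z * Real.cos θ) * Real.cos (k * θ)

/-- Modified Bessel function of integer order `k`, real argument. -/
noncomputable def besselIR (k : ℤ) (x : ℝ) : ℝ :=
  (1 / Real.pi) * ∫ θ in (0:ℝ)..Real.pi, Real.exp (x * Real.cos θ) * Real.cos (k * θ)

open Real

noncomputable def CC (n : ℕ) (k : ℤ) : ℝ :=
  ∫ θ in (0:ℝ)..Real.pi, (Real.cos θ)^n * Real.cos (k * θ)

lemma CC_cont (n : ℕ) (k : ℤ) : Continuous fun θ : ℝ => (Real.cos θ)^n * Real.cos (k*θ) := by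
  fun_prop

lemma CC_zero (k : ℤ) : CC 0 k = if k = 0 then Real.pi else 0 := by
  unfold CC
  split_ifs with hk
  · simp [hk]
  · have hk' : (k:ℝ) ≠ 0 := Int.cast_ne_zero.mpr hk
    simp only [pow_zero, one_mul]
    rw [intervalIntegral.integral_comp_mul_left Real.cos hk', integral_cos]
    simp [Real.sin_int_mul_pi]

lemma cos_rec (k : ℤ) (θ : ℝ) :
    Real.cos θ * Real.cos (k*θ) = (Real.cos (((k:ℝ)+1)*θ) + Real.cos (((k:ℝ)-1)*θ))/2 := by
  rw [show ((k:ℝ)+1)*θ = θ + k*θ by ring, show ((k:ℝ)-1)*θ = -(θ - k*θ) by ring,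
      Real.cos_neg, Real.cos_add, Real.cos_sub]
  ring

lemma CC_rec (n : ℕ) (k : ℤ) : CC (n+1) k = (CC n (k+1) + CC n (k-1))/2 := by
  unfold CC
  rw [intervalIntegral.integral_congr (g := fun θ =>
      ((Real.cos θ)^n * Real.cos (((k:ℝ)+1)*θ) + (Real.cos θ)^n * Real.cos (((k:ℝ)-1)*θ))/2)]
  · rw [intervalIntegral.integral_div, intervalIntegral.integral_add]
    · push_cast
      ring
    · exact (by fun_prop : Continuous fun θ:ℝ => (Real.cos θ)^n * Real.cos (((k:ℝ)+1)*θ)).intervalIntegrable _ _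
    · exact (by fun_prop : Continuous fun θ:ℝ => (Real.cos θ)^n * Real.cos (((k:ℝ)-1)*θ)).intervalIntegrable _ _
  · intro θ _
    simp only [pow_succ, mul_assoc, cos_rec k θ]
    ring

lemma CC_nonneg (n : ℕ) (k : ℤ) : 0 ≤ CC n k := by
  induction n generalizing k with
  | zero => rw [CC_zero]; split_ifs; exacts [Real.pi_pos.le, le_refl 0]
  | succ n ih => rw [CC_rec]; have := ih (k+1); have := ih (k-1); linarith

lemma CC_le_pi (n : ℕ) (k : ℤ) : CC n k ≤ Real.pi := by
  have h := intervalIntegral.norm_integral_le_of_norm_le_const (C := 1)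
    (f := fun θ : ℝ => (Real.cos θ)^n * Real.cos (k*θ)) (a := 0) (b := Real.pi) ?_
  · rw [Real.norm_eq_abs] at h
    rw [sub_zero, abs_of_pos Real.pi_pos] at h
    have := (abs_le.mp h).2
    simpa [CC] using this
  · intro x _
    rw [Real.norm_eq_abs, abs_mul, abs_pow]
    calc |Real.cos x|^n * |Real.cos (k*x)| ≤ 1^n * 1 := by
          gcongr <;> [exact Real.abs_cos_le_one x; exact Real.abs_cos_le_one _]
      _ = 1 := by norm_num

lemma CC_vanish (n : ℕ) (k : ℤ) (h : (n:ℤ) < |k|) : CC n k = 0 := by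
  induction n generalizing k with
  | zero => rw [CC_zero, if_neg]; intro hk; simp [hk] at h
  | succ n ih =>
    have h1 : |k| ≤ |k+1| + 1 := by simpa using abs_add_le (k+1) (-1)
    have h2 : |k| ≤ |k-1| + 1 := by simpa using abs_add_le (k-1) 1
    push_cast at h
    rw [CC_rec, ih (k+1) (by push_cast; linarith), ih (k-1) (by push_cast; linarith)]
    norm_num

lemma exp_eq_tsum_div_c (x : ℂ) : Complex.exp x = ∑' n : ℕ, x^n / n.factorial := by
  rw [Complex.exp_eq_exp_ℂ, NormedSpace.exp_eq_tsum_div]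

lemma exp_eq_tsum_div_r (x : ℝ) : Real.exp x = ∑' n : ℕ, x^n / n.factorial := by
  rw [Real.exp_eq_exp_ℝ, NormedSpace.exp_eq_tsum_div]

lemma norm_term_le (k : ℤ) (z : ℂ) (n : ℕ) (θ : ℝ) :
    ‖z^n * (Real.cos θ:ℂ)^n * (Real.cos (k*θ):ℂ) / n.factorial‖ ≤ ‖z‖^n / n.factorial := by
  rw [norm_div, norm_mul, norm_mul, norm_pow, norm_pow, Complex.norm_real, Complex.norm_real,
    Complex.norm_natCast]
  have h1 : ‖Real.cos θ‖^n ≤ 1 := pow_le_one₀ (norm_nonneg _) (by rw [Real.norm_eq_abs]; exact Real.abs_cos_le_one θ)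
  have h2 : ‖Real.cos ((k:ℝ)*θ)‖ ≤ 1 := by rw [Real.norm_eq_abs]; exact Real.abs_cos_le_one _
  calc ‖z‖^n * ‖Real.cos θ‖^n * ‖Real.cos ((k:ℝ)*θ)‖ / n.factorial
      ≤ ‖z‖^n * 1 * 1 / n.factorial := by gcongr <;> positivity
    _ = ‖z‖^n / n.factorial := by ring

lemma besselI_eq_tsum (k : ℤ) (z : ℂ) :
    besselI k z = (1/(Real.pi:ℂ)) * ∑' n : ℕ, z^n / n.factorial * ((CC n k : ℝ) : ℂ) := by
  unfold besselI
  congr 1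
  have h0 : (0:ℝ) ≤ Real.pi := Real.pi_pos.le
  set F : ℕ → ℝ → ℂ := fun n θ => z^n * (Real.cos θ:ℂ)^n * (Real.cos ((k:ℝ)*θ):ℂ) / n.factorial with hF
  have hcont : ∀ n : ℕ, Continuous (F n) := by intro n; rw [hF]; fun_prop
  have key : ∑' n, ∫ θ in Set.Ioc (0:ℝ) Real.pi, F n θ
      = ∫ θ in Set.Ioc (0:ℝ) Real.pi, ∑' n, F n θ := by
    apply integral_tsum_of_summable_integral_norm
    · intro n; exact (hcont n).integrableOn_Ioc
    · apply Summable.of_nonneg_of_le (fun n => integral_nonneg (fun θ => norm_nonneg _))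
        (fun n => ?_) ((Real.summable_pow_div_factorial ‖z‖).mul_right Real.pi)
      calc (∫ θ in Set.Ioc (0:ℝ) Real.pi, ‖F n θ‖)
          ≤ ∫ _θ in Set.Ioc (0:ℝ) Real.pi, ‖z‖^n / n.factorial := by
            apply setIntegral_mono_on ((hcont n).norm.integrableOn_Ioc)
              ((integrableOn_const_iff).mpr (Or.inr (by simp [Real.pi_pos])))
              measurableSet_Ioc
            intro θ _; exact norm_term_le k z n θ
        _ = ‖z‖^n / n.factorial * Real.pi := by
            simp [Real.volume_Ioc, h0, mul_comm]
  rw [intervalIntegral.integral_of_le h0]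
  have hpt : ∀ θ : ℝ, Complex.exp (z * Real.cos θ) * Real.cos ((k:ℝ)*θ) = ∑' n, F n θ := by
    intro θ
    rw [exp_eq_tsum_div_c, ← tsum_mul_right]
    congr 1; ext n; rw [hF]; simp only [mul_pow]; ring
  calc (∫ θ in Set.Ioc (0:ℝ) Real.pi, Complex.exp (z * Real.cos θ) * (Real.cos ((k:ℝ)*θ):ℂ))
      = ∫ θ in Set.Ioc (0:ℝ) Real.pi, ∑' n, F n θ := by
        apply setIntegral_congr_fun measurableSet_Ioc; intro θ _; exact hpt θ
    _ = ∑' n, ∫ θ in Set.Ioc (0:ℝ) Real.pi, F n θ := key.symm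
    _ = ∑' n : ℕ, z^n / n.factorial * ((CC n k : ℝ) : ℂ) := by
        congr 1; ext n
        rw [← intervalIntegral.integral_of_le h0]
        have : ∀ θ : ℝ, F n θ = (z^n / n.factorial) * (((Real.cos θ)^n * Real.cos ((k:ℝ)*θ) : ℝ) : ℂ) := by
          intro θ; rw [hF]; push_cast; ring
        rw [intervalIntegral.integral_congr (fun θ _ => this θ), intervalIntegral.integral_const_mul,
          intervalIntegral.integral_ofReal]
        rfl

lemma besselI_ofReal (k : ℤ) (x : ℝ) : besselI k x = ((besselIR k x : ℝ) : ℂ) := by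
  unfold besselI besselIR
  push_cast
  congr 1
  rw [← intervalIntegral.integral_ofReal]
  apply intervalIntegral.integral_congr
  intro θ _
  push_cast [Complex.ofReal_exp]
  norm_num

lemma besselIR_eq_tsum (k : ℤ) (x : ℝ) :
    besselIR k x = (1/Real.pi) * ∑' n : ℕ, x^n / n.factorial * CC n k := by
  have h := besselI_eq_tsum k x
  rw [besselI_ofReal] at h
  apply Complex.ofReal_injective
  rw [h]
  push_cast [Complex.ofReal_tsum]
  norm_num

lemma norm_term (k : ℤ) (z : ℂ) (n : ℕ) :
    ‖z^n / n.factorial * ((CC n k : ℝ) : ℂ)‖ = ‖z‖^n / n.factorial * CC n k := by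
  rw [norm_mul, norm_div, norm_pow, Complex.norm_natCast, Complex.norm_real, Real.norm_eq_abs,
    abs_of_nonneg (CC_nonneg n k)]

lemma summable_term_r (k : ℤ) (x : ℝ) : Summable (fun n : ℕ => x^n / n.factorial * CC n k) := by
  apply Summable.of_norm
  apply Summable.of_nonneg_of_le (fun n => norm_nonneg _) (fun n => ?_)
    ((Real.summable_pow_div_factorial |x|).mul_right Real.pi)
  rw [Real.norm_eq_abs, abs_mul, abs_of_nonneg (CC_nonneg n k), abs_div, abs_pow, abs_of_nonneg (by positivity : (0:ℝ) ≤ (n.factorial:ℝ))]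
  exact mul_le_mul_of_nonneg_left (CC_le_pi n k) (by positivity)

lemma summable_term_c (k : ℤ) (z : ℂ) : Summable (fun n : ℕ => z^n / n.factorial * ((CC n k : ℝ):ℂ)) := by
  apply Summable.of_norm
  simp only [norm_term]
  exact summable_term_r k ‖z‖

lemma norm_besselI_le (k : ℤ) (z : ℂ) : ‖besselI k z‖ ≤ besselIR k ‖z‖ := by
  rw [besselI_eq_tsum, besselIR_eq_tsum, norm_mul,
    (show ‖(1/(Real.pi:ℂ))‖ = 1/Real.pi by
      rw [norm_div, norm_one, Complex.norm_real, Real.norm_eq_abs, abs_of_pos Real.pi_pos])]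
  apply mul_le_mul_of_nonneg_left ?_ (by positivity)
  calc ‖∑' n : ℕ, z^n / n.factorial * ((CC n k : ℝ) : ℂ)‖
        ≤ ∑' n : ℕ, ‖z^n / n.factorial * ((CC n k : ℝ) : ℂ)‖ :=
          norm_tsum_le_tsum_norm ((summable_term_c k z).norm)
      _ = ∑' n : ℕ, ‖z‖^n / n.factorial * CC n k := by simp only [norm_term]

lemma besselIR_nonneg (k : ℤ) (x : ℝ) (hx : 0 ≤ x) : 0 ≤ besselIR k x := by
  rw [besselIR_eq_tsum]
  have : ∀ n : ℕ, 0 ≤ x^n / n.factorial * CC n k := fun n =>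
    mul_nonneg (by positivity) (CC_nonneg n k)
  exact mul_nonneg (by positivity) (tsum_nonneg this)

lemma one_le_besselIR_zero (x : ℝ) (hx : 0 ≤ x) : 1 ≤ besselIR 0 x := by
  rw [besselIR_eq_tsum]
  have h0 : x^0 / (Nat.factorial 0) * CC 0 0 = Real.pi := by simp [CC_zero]
  have hle : Real.pi ≤ ∑' n : ℕ, x^n / n.factorial * CC n 0 := by
    rw [← h0]
    apply Summable.le_tsum (summable_term_r 0 x) 0
    intro n _
    exact mul_nonneg (by positivity) (CC_nonneg n 0)
  calc (1:ℝ) = (1/Real.pi) * Real.pi := by field_simp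
    _ ≤ _ := mul_le_mul_of_nonneg_left hle (by positivity)
  
lemma besselIR_zero_mono {x y : ℝ} (hx : 0 ≤ x) (hxy : x ≤ y) : besselIR 0 x ≤ besselIR 0 y := by
  rw [besselIR_eq_tsum, besselIR_eq_tsum]
  apply mul_le_mul_of_nonneg_left ?_ (by positivity)
  apply Summable.tsum_le_tsum _ (summable_term_r 0 x) (summable_term_r 0 y)
  intro n
  apply mul_le_mul_of_nonneg_right ?_ (CC_nonneg n 0)
  gcongr

lemma besselI_zero (k : ℤ) : besselI k 0 = if k = 0 then 1 else 0 := by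
  rw [besselI_eq_tsum]
  rw [tsum_eq_single 0 (fun n hn => by simp [zero_pow hn])]
  have hπ : ((Real.pi:ℝ):ℂ) ≠ 0 := by exact_mod_cast Real.pi_pos.ne'
  split_ifs with hk <;> simp [CC_zero, hk] <;> field_simp

lemma norm_besselI_decay (k : ℤ) (z : ℂ) :
    ‖besselI k z‖ ≤ ‖z‖^(k.natAbs) / (k.natAbs.factorial) * Real.exp ‖z‖ := by
  set K := k.natAbs with hK
  set t : ℕ → ℂ := fun n => z^n / n.factorial * ((CC n k : ℝ) : ℂ) with ht
  have hshift : ∑' n, t n = ∑' n, t (n + K) := by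
    apply (Function.Injective.tsum_eq (f := t) (g := fun n : ℕ => n + K) (add_left_injective K) ?_).symm
    intro x hx
    by_cases hxK : K ≤ x
    · exact ⟨x - K, by simp; omega⟩
    · exfalso
      apply hx
      have : (x:ℤ) < |k| := by rw [Int.abs_eq_natAbs]; exact_mod_cast not_le.mp hxK
      simp [ht, CC_vanish x k this]
  have hb : ∀ n : ℕ, ‖t (n+K)‖ ≤ Real.pi * ((‖z‖^K/(K.factorial)) * (‖z‖^n/(n.factorial))) := by
    intro n
    rw [norm_term]
    have hfac : (n.factorial : ℝ) * K.factorial ≤ ((n+K).factorial : ℝ) := by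
      exact_mod_cast Nat.le_of_dvd (Nat.factorial_pos _) (Nat.factorial_mul_factorial_dvd_factorial_add n K)
    calc ‖z‖^(n+K) / (n+K).factorial * CC (n+K) k
        ≤ ‖z‖^(n+K) / ((n.factorial:ℝ) * K.factorial) * Real.pi := by
          have h1 : (0:ℝ) < (n.factorial:ℝ) * K.factorial := by positivity
          apply mul_le_mul (by gcongr) (CC_le_pi _ _) (CC_nonneg _ _) (by positivity)
      _ = Real.pi * ((‖z‖^K/(K.factorial)) * (‖z‖^n/(n.factorial))) := by
          rw [pow_add]; ring
  have hsum : Summable (fun n : ℕ => Real.pi * ((‖z‖^K/(K.factorial)) * (‖z‖^n/(n.factorial)))) :=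
    ((Real.summable_pow_div_factorial ‖z‖).mul_left _).mul_left _
  calc ‖besselI k z‖ = (1/Real.pi) * ‖∑' n, t (n+K)‖ := by
        rw [besselI_eq_tsum, ← hshift, norm_mul,
          (show ‖(1/(Real.pi:ℂ))‖ = 1/Real.pi by
            rw [norm_div, norm_one, Complex.norm_real, Real.norm_eq_abs, abs_of_pos Real.pi_pos])]
    _ ≤ (1/Real.pi) * ∑' n, Real.pi * ((‖z‖^K/(K.factorial)) * (‖z‖^n/(n.factorial))) := by
        apply mul_le_mul_of_nonneg_left ?_ (by positivity)
        exact (norm_tsum_le_tsum_norm (Summable.of_nonneg_of_le (fun n => norm_nonneg _) hb hsum)).trans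
            (Summable.tsum_le_tsum hb (Summable.of_nonneg_of_le (fun n => norm_nonneg _) hb hsum) hsum)
    _ = ‖z‖^K / (K.factorial) * Real.exp ‖z‖ := by
        rw [tsum_mul_left, tsum_mul_left, exp_eq_tsum_div_r]
        field_simp

lemma summable_norm_besselI (z : ℂ) : Summable (fun m : ℤ => ‖besselI m z‖) := by
  apply Summable.of_nonneg_of_le (fun m => norm_nonneg _) (fun m => norm_besselI_decay m z)
  apply Summable.of_nat_of_neg <;>
  · simp only [Int.natAbs_neg, Int.natAbs_natCast]
    exact (Real.summable_pow_div_factorial ‖z‖).mul_right _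

lemma norm_exp_I_mul (m : ℤ) (θ : ℝ) : ‖Complex.exp (Complex.I * m * θ)‖ = 1 := by
  rw [Complex.norm_exp]
  simp [Complex.mul_re]

lemma summable_CC_mul (n : ℕ) (a : ℤ) (v : ℤ → ℂ) :
    Summable (fun m : ℤ => ((CC n (m+a):ℝ):ℂ) * v m) := by
  apply summable_of_ne_finset_zero (s := Finset.Icc (-(n:ℤ)-|a|) ((n:ℤ)+|a|))
  intro m hm
  simp only [Finset.mem_Icc, not_and_or, not_le] at hm
  have h1 : |m| ≤ |m+a| + |a| := by simpa using abs_add_le (m+a) (-a)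
  have h2 : (n:ℤ) + |a| < |m| := by
    rcases hm with hm | hm
    · calc (n:ℤ) + |a| < -m := by linarith
        _ ≤ |m| := by simpa using neg_le_abs m
    · exact lt_of_lt_of_le hm (le_abs_self m)
  rw [CC_vanish n (m+a) (by linarith)]
  simp

lemma tsum_CC_exp (n : ℕ) (θ : ℝ) :
    ∑' m : ℤ, ((CC n m : ℝ):ℂ) * Complex.exp (Complex.I * m * θ)
      = Real.pi * (Real.cos θ:ℂ)^n := by
  induction n with
  | zero =>
    rw [tsum_eq_single 0 (fun m hm => by
      rw [CC_zero, if_neg hm]; simp)]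
    simp [CC_zero]
  | succ n ih =>
    have l1 : ∀ m : ℤ, ((CC (n+1) m : ℝ):ℂ) * Complex.exp (Complex.I * m * θ)
        = (1/2) * (((CC n (m+1):ℝ):ℂ) * Complex.exp (Complex.I * m * θ))
          + (1/2) * (((CC n (m+(-1)):ℝ):ℂ) * Complex.exp (Complex.I * m * θ)) := by
      intro m
      rw [CC_rec]
      push_cast
      ring_nf
    rw [tsum_congr l1, Summable.tsum_add ((summable_CC_mul n 1 _).mul_left _)
      ((summable_CC_mul n (-1) _).mul_left _), tsum_mul_left, tsum_mul_left]
    have s1 : ∑' m : ℤ, ((CC n (m+1):ℝ):ℂ) * Complex.exp (Complex.I * m * θ)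
        = Complex.exp (-(Complex.I * θ)) * (Real.pi * (Real.cos θ:ℂ)^n) := by
      rw [← ih, ← tsum_mul_left]
      rw [← (Equiv.addRight (1:ℤ)).tsum_eq
        (fun m : ℤ => Complex.exp (-(Complex.I * θ)) * (((CC n m : ℝ):ℂ) * Complex.exp (Complex.I * m * θ)))]
      apply tsum_congr
      intro m
      simp only [Equiv.coe_addRight]
      have key : Complex.exp (Complex.I * (((m+1):ℤ):ℂ) * θ)
          = Complex.exp (Complex.I*θ) * Complex.exp (Complex.I*(m:ℂ)*θ) := by
        rw [← Complex.exp_add]; congr 1; push_cast; ring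
      rw [key, Complex.exp_neg]
      field_simp
    have s2 : ∑' m : ℤ, ((CC n (m+(-1)):ℝ):ℂ) * Complex.exp (Complex.I * m * θ)
        = Complex.exp (Complex.I * θ) * (Real.pi * (Real.cos θ:ℂ)^n) := by
      rw [← ih, ← tsum_mul_left]
      rw [← (Equiv.addRight (-1:ℤ)).tsum_eq
        (fun m : ℤ => Complex.exp (Complex.I * θ) * (((CC n m : ℝ):ℂ) * Complex.exp (Complex.I * m * θ)))]
      apply tsum_congr
      intro m
      simp only [Equiv.coe_addRight]
      have key : Complex.exp (Complex.I * (((m+(-1)):ℤ):ℂ) * θ)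
          = Complex.exp (-(Complex.I*θ)) * Complex.exp (Complex.I*(m:ℂ)*θ) := by
        rw [← Complex.exp_add]; congr 1; push_cast; ring
      rw [key, Complex.exp_neg]
      field_simp
    rw [s1, s2]
    have hcos : Complex.exp (Complex.I * θ) + Complex.exp (-(Complex.I * θ))
        = 2 * (Real.cos θ : ℂ) := by
      rw [Complex.ofReal_cos, Complex.two_cos]
      ring_nf
    calc 1/2 * (Complex.exp (-(Complex.I * θ)) * (Real.pi * (Real.cos θ:ℂ)^n))
          + 1/2 * (Complex.exp (Complex.I * θ) * (Real.pi * (Real.cos θ:ℂ)^n))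
        = (Complex.exp (Complex.I * θ) + Complex.exp (-(Complex.I * θ))) / 2
            * (Real.pi * (Real.cos θ:ℂ)^n) := by ring
      _ = Real.pi * (Real.cos θ:ℂ)^(n+1) := by rw [hcos]; ring

lemma jacobi_anger (z : ℂ) (θ : ℝ) :
    ∑' m : ℤ, besselI m z * Complex.exp (Complex.I * m * θ)
      = Complex.exp (z * Real.cos θ) := by
  have hπ : ((Real.pi:ℝ):ℂ) ≠ 0 := by exact_mod_cast Real.pi_pos.ne'
  set G : ℤ → ℕ → ℂ := fun m n =>
    ((1/(Real.pi:ℂ)) * (z^n/n.factorial)) * (((CC n m:ℝ):ℂ) * Complex.exp (Complex.I * m * θ)) with hG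
  have hrow : ∀ m : ℤ, besselI m z * Complex.exp (Complex.I * m * θ) = ∑' n : ℕ, G m n := by
    intro m
    rw [besselI_eq_tsum, mul_assoc, ← tsum_mul_right, ← tsum_mul_left]
    exact tsum_congr fun n => by rw [hG]; ring
  have hnorm : ∀ (m : ℤ) (n : ℕ), ‖G m n‖ = 1/Real.pi * (‖z‖^n/n.factorial * CC n m) := by
    intro m n
    rw [hG]
    simp only [norm_mul, norm_div, norm_one, norm_pow, Complex.norm_natCast, Complex.norm_real,
      norm_exp_I_mul, mul_one, Real.norm_eq_abs, abs_of_pos Real.pi_pos,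
      abs_of_nonneg (CC_nonneg n m)]
    ring
  have hG1 : ∀ m : ℤ, Summable (G m) := by
    intro m
    apply Summable.congr (((summable_term_c m z).mul_right
      (Complex.exp (Complex.I * m * θ))).mul_left (1/(Real.pi:ℂ)))
    intro n; rw [hG]; ring
  have hG2 : ∀ n : ℕ, Summable (fun m : ℤ => G m n) := by
    intro n
    apply Summable.congr ((summable_CC_mul n 0 (fun m : ℤ => Complex.exp (Complex.I * m * θ))).mul_left
      ((1/(Real.pi:ℂ)) * (z^n/n.factorial)))
    intro m; rw [hG]; norm_num
  have hrowsum : ∀ m : ℤ, ∑' n : ℕ, ‖G m n‖ = besselIR m ‖z‖ := by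
    intro m
    calc ∑' n : ℕ, ‖G m n‖ = ∑' n : ℕ, 1/Real.pi * (‖z‖^n/n.factorial * CC n m) :=
          tsum_congr fun n => hnorm m n
      _ = 1/Real.pi * ∑' n : ℕ, ‖z‖^n/n.factorial * CC n m := tsum_mul_left
      _ = besselIR m ‖z‖ := (besselIR_eq_tsum m ‖z‖).symm
  have huncurry : Summable (Function.uncurry G) := by
    apply Summable.of_norm
    rw [show (fun p : ℤ × ℕ => ‖Function.uncurry G p‖) = fun p : ℤ × ℕ => ‖G p.1 p.2‖ from rfl]
    apply (summable_prod_of_nonneg (fun p => norm_nonneg _)).mpr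
    constructor
    · intro m; exact summable_norm_iff.mpr (hG1 m)
    · apply Summable.congr ((summable_norm_besselI ((‖z‖:ℝ):ℂ)).congr (fun m => ?_))
        (fun m => (hrowsum m).symm)
      rw [besselI_ofReal, Complex.norm_real, Real.norm_eq_abs,
        abs_of_nonneg (besselIR_nonneg m ‖z‖ (norm_nonneg z))]
  calc ∑' m : ℤ, besselI m z * Complex.exp (Complex.I * m * θ)
      = ∑' (m : ℤ) (n : ℕ), G m n := tsum_congr hrow
    _ = ∑' (n : ℕ) (m : ℤ), G m n := (Summable.tsum_comm' huncurry hG1 hG2).symm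
    _ = ∑' n : ℕ, ((1/(Real.pi:ℂ)) * (z^n/n.factorial)) * (Real.pi * (Real.cos θ:ℂ)^n) := by
        apply tsum_congr; intro n
        rw [← tsum_CC_exp n θ, ← tsum_mul_left]
    _ = ∑' n : ℕ, (z * (Real.cos θ:ℂ))^n / n.factorial := by
        apply tsum_congr; intro n
        rw [show ((1/(Real.pi:ℂ)) * ((z:ℂ)^n/n.factorial)) * (Real.pi * (Real.cos θ:ℂ)^n)
            = (((Real.pi:ℝ):ℂ) / ((Real.pi:ℝ):ℂ)) * ((z * (Real.cos θ:ℂ))^n / n.factorial) by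
          rw [mul_pow]; ring, div_self hπ, one_mul]
    _ = Complex.exp (z * Real.cos θ) := (exp_eq_tsum_div_c _).symm

lemma summable_bessel_exp (z : ℂ) (θ : ℝ) :
    Summable (fun m : ℤ => besselI m z * Complex.exp (Complex.I * m * θ)) := by
  apply Summable.of_norm
  apply Summable.congr (summable_norm_besselI z)
  intro m
  rw [norm_mul, norm_exp_I_mul, mul_one]

lemma jacobi_anger_cos (z : ℂ) (k : ℤ) (θ : ℝ) :
    ∑' m : ℤ, besselI m z * ((Real.cos (((k-m):ℤ)*θ) : ℝ) : ℂ)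
      = Complex.exp (z * Real.cos θ) * ((Real.cos ((k:ℝ)*θ) : ℝ) : ℂ) := by
  have hterm : ∀ m : ℤ, besselI m z * ((Real.cos (((k-m):ℤ)*θ) : ℝ) : ℂ)
      = (1/2) * Complex.exp (Complex.I * k * θ) * (besselI m z * Complex.exp (Complex.I * m * ((-θ:ℝ):ℂ)))
      + (1/2) * Complex.exp (-(Complex.I * k * θ)) * (besselI m z * Complex.exp (Complex.I * m * θ)) := by
    intro m
    have h2 := Complex.two_cos (((((k-m):ℤ):ℝ)*θ :ℝ):ℂ)
    rw [show ((((((k-m):ℤ):ℝ)*θ :ℝ)):ℂ) * Complex.I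
        = Complex.I*(k:ℂ)*θ - Complex.I*(m:ℂ)*θ by push_cast; ring,
      show -(((((((k-m):ℤ):ℝ)*θ :ℝ))):ℂ) * Complex.I
        = Complex.I*(m:ℂ)*θ - Complex.I*(k:ℂ)*θ by push_cast; ring] at h2
    have h3 : Complex.exp (Complex.I*(k:ℂ)*θ - Complex.I*(m:ℂ)*θ)
        = Complex.exp (Complex.I*(k:ℂ)*θ) * Complex.exp (Complex.I*(m:ℂ)*((-θ:ℝ):ℂ)) := by
      rw [← Complex.exp_add]; congr 1; push_cast; ring
    have h4 : Complex.exp (Complex.I*(m:ℂ)*θ - Complex.I*(k:ℂ)*θ)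
        = Complex.exp (-(Complex.I*(k:ℂ)*θ)) * Complex.exp (Complex.I*(m:ℂ)*θ) := by
      rw [← Complex.exp_add]; congr 1; push_cast; ring
    rw [Complex.ofReal_cos]
    linear_combination (besselI m z / 2) * h2 + (besselI m z / 2) * h3 + (besselI m z / 2) * h4
  have s1 : Summable (fun m : ℤ =>
      (1/2) * Complex.exp (Complex.I * k * θ) * (besselI m z * Complex.exp (Complex.I * m * ((-θ:ℝ):ℂ)))) :=
    (summable_bessel_exp z (-θ)).mul_left _
  have s2 : Summable (fun m : ℤ =>
      (1/2) * Complex.exp (-(Complex.I * k * θ)) * (besselI m z * Complex.exp (Complex.I * m * θ))) :=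
    (summable_bessel_exp z θ).mul_left _
  rw [tsum_congr hterm, Summable.tsum_add s1 s2, tsum_mul_left, tsum_mul_left, jacobi_anger z θ,
    jacobi_anger z (-θ)]
  simp only [Real.cos_neg]
  have h2 := Complex.two_cos ((((k:ℝ)*θ :ℝ)):ℂ)
  rw [show (((((k:ℝ)*θ :ℝ))):ℂ) * Complex.I = Complex.I*(k:ℂ)*θ by push_cast; ring,
    show -((((((k:ℝ)*θ :ℝ)))):ℂ) * Complex.I = -(Complex.I*(k:ℂ)*θ) by push_cast; ring] at h2
  rw [Complex.ofReal_cos ((k:ℝ)*θ)]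
  linear_combination (-(Complex.exp (z * ((Real.cos θ:ℝ):ℂ)) / 2)) * h2

lemma norm_exp_cos_le (w : ℂ) (θ : ℝ) : ‖Complex.exp (w * Real.cos θ)‖ ≤ Real.exp ‖w‖ := by
  rw [Complex.norm_exp]
  apply Real.exp_le_exp.mpr
  calc (w * ((Real.cos θ:ℝ):ℂ)).re ≤ ‖w * ((Real.cos θ:ℝ):ℂ)‖ := Complex.re_le_norm _
    _ = ‖w‖ * |Real.cos θ| := by
        rw [norm_mul, Complex.norm_real, Real.norm_eq_abs]
    _ ≤ ‖w‖ * 1 := by gcongr; exact Real.abs_cos_le_one θ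
    _ = ‖w‖ := mul_one _

lemma besselI_add (k : ℤ) (z w : ℂ) :
    ∑' m : ℤ, besselI m z * besselI (k-m) w = besselI k (z+w) := by
  have h0 : (0:ℝ) ≤ Real.pi := Real.pi_pos.le
  set H : ℤ → ℝ → ℂ := fun m θ =>
    besselI m z * (Complex.exp (w * Real.cos θ) * ((Real.cos (((k-m):ℤ)*θ):ℝ):ℂ)) with hH
  have hterm : ∀ m : ℤ, besselI m z * besselI (k-m) w
      = (1/(Real.pi:ℂ)) * ∫ θ in Set.Ioc (0:ℝ) Real.pi, H m θ := by
    intro m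
    have hb : besselI (k-m) w = (1/(Real.pi:ℂ)) * ∫ θ in Set.Ioc (0:ℝ) Real.pi,
        Complex.exp (w * Real.cos θ) * ((Real.cos (((k-m):ℤ)*θ):ℝ):ℂ) := by
      rw [besselI, intervalIntegral.integral_of_le h0]
    rw [hb]
    calc besselI m z * ((1/(Real.pi:ℂ)) * ∫ θ in Set.Ioc (0:ℝ) Real.pi,
            Complex.exp (w * Real.cos θ) * ((Real.cos (((k-m):ℤ)*θ):ℝ):ℂ))
        = (1/(Real.pi:ℂ)) * (besselI m z * ∫ θ in Set.Ioc (0:ℝ) Real.pi,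
            Complex.exp (w * Real.cos θ) * ((Real.cos (((k-m):ℤ)*θ):ℝ):ℂ)) := by ring
      _ = (1/(Real.pi:ℂ)) * ∫ θ in Set.Ioc (0:ℝ) Real.pi, H m θ := by
          rw [← integral_const_mul, hH]
  have hcont : ∀ m : ℤ, Continuous (H m) := by intro m; rw [hH]; fun_prop
  have hswap : ∑' m : ℤ, ∫ θ in Set.Ioc (0:ℝ) Real.pi, H m θ
      = ∫ θ in Set.Ioc (0:ℝ) Real.pi, ∑' m : ℤ, H m θ := by
    apply integral_tsum_of_summable_integral_norm
    · intro m; exact (hcont m).integrableOn_Ioc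
    · apply Summable.of_nonneg_of_le (fun m => integral_nonneg (fun θ => norm_nonneg _))
        (fun m => ?_) (((summable_norm_besselI z).mul_right (Real.exp ‖w‖)).mul_right Real.pi)
      calc (∫ θ in Set.Ioc (0:ℝ) Real.pi, ‖H m θ‖)
          ≤ ∫ _θ in Set.Ioc (0:ℝ) Real.pi, ‖besselI m z‖ * Real.exp ‖w‖ := by
            apply setIntegral_mono_on ((hcont m).norm.integrableOn_Ioc)
              ((integrableOn_const_iff).mpr (Or.inr (by simp [Real.pi_pos])))
              measurableSet_Ioc
            intro θ _
            rw [hH]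
            simp only [norm_mul]
            have hc : ‖((Real.cos (((k-m):ℤ)*θ):ℝ):ℂ)‖ ≤ 1 := by
              rw [Complex.norm_real, Real.norm_eq_abs]; exact Real.abs_cos_le_one _
            calc ‖besselI m z‖ * (‖Complex.exp (w * Real.cos θ)‖ * ‖((Real.cos (((k-m):ℤ)*θ):ℝ):ℂ)‖)
                ≤ ‖besselI m z‖ * (Real.exp ‖w‖ * 1) := by
                  gcongr
                  exact norm_exp_cos_le w θ
              _ = ‖besselI m z‖ * Real.exp ‖w‖ := by ring
        _ = ‖besselI m z‖ * Real.exp ‖w‖ * Real.pi := by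
            simp [Real.volume_Ioc, h0, mul_comm]
  have hpt : ∀ θ : ℝ, ∑' m : ℤ, H m θ
      = Complex.exp ((z+w) * Real.cos θ) * ((Real.cos ((k:ℝ)*θ):ℝ):ℂ) := by
    intro θ
    have : ∀ m : ℤ, H m θ = Complex.exp (w * Real.cos θ)
        * (besselI m z * ((Real.cos (((k-m):ℤ)*θ):ℝ):ℂ)) := by
      intro m; rw [hH]; ring
    rw [tsum_congr this, tsum_mul_left, jacobi_anger_cos z k θ, ← mul_assoc, ← Complex.exp_add]
    congr 2
    ring
  rw [tsum_congr hterm, tsum_mul_left, hswap,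
    setIntegral_congr_fun measurableSet_Ioc (fun θ _ => hpt θ),
    besselI, intervalIntegral.integral_of_le h0]

/-- The explicit solution of the discrete Schrödinger equation with initial datum
f_k(0) = I_k(i/(2h²))/I_0(5/(2h²)): at time 1 it equals
e^{-2i/h²} I_k(5i/(2h²))/I_0(5/(2h²)), with the stated Bessel bounds at times 0 and 1. -/
theorem stmt_10 (h : ℝ) (hh : 0 < h)
    (f : ℤ → ℝ → ℂ)
    (hf : ∀ (k : ℤ) (t : ℝ),
      f k t = Complex.exp (-2 * Complex.I * (t : ℂ) / (h : ℂ) ^ 2) *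
        ∑' m : ℤ, (besselI m (Complex.I / (2 * (h : ℂ) ^ 2)) /
            (besselIR 0 (5 / (2 * h ^ 2)) : ℝ)) *
          besselI (k - m) (2 * Complex.I * (t : ℂ) / (h : ℂ) ^ 2)) :
    (∀ k : ℤ, f k 1 = Complex.exp (-2 * Complex.I / (h : ℂ) ^ 2) *
        besselI k (5 * Complex.I / (2 * (h : ℂ) ^ 2)) / (besselIR 0 (5 / (2 * h ^ 2)) : ℝ)) ∧
    (∀ k : ℤ, ‖f k 0‖ ≤ besselIR k (1 / (2 * h ^ 2)) / besselIR 0 (1 / (2 * h ^ 2))) ∧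
    (∀ k : ℤ, ‖f k 1‖ ≤ besselIR k (5 / (2 * h ^ 2)) / besselIR 0 (5 / (2 * h ^ 2))) := by
  have hh2 : (0:ℝ) < 2 * h ^ 2 := by positivity
  have hD1 : (1:ℝ) ≤ besselIR 0 (5 / (2 * h ^ 2)) := one_le_besselIR_zero _ (by positivity)
  have hD : (0:ℝ) < besselIR 0 (5 / (2 * h ^ 2)) := lt_of_lt_of_le one_pos hD1
  have hhc : ((h:ℝ):ℂ) ≠ 0 := Complex.ofReal_ne_zero.mpr hh.ne'
  set z : ℂ := Complex.I / (2 * (h : ℂ) ^ 2) with hz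
  have hznorm : ‖z‖ = 1 / (2 * h ^ 2) := by
    rw [hz, show (2 * (h:ℂ)^2) = (((2 * h^2 : ℝ)):ℂ) by push_cast; ring, norm_div,
      Complex.norm_I, Complex.norm_real, Real.norm_eq_abs,
      abs_of_pos hh2]
  have key1 : ∀ k : ℤ, f k 1 = Complex.exp (-2 * Complex.I / (h : ℂ) ^ 2) *
      besselI k (5 * Complex.I / (2 * (h : ℂ) ^ 2)) / (besselIR 0 (5 / (2 * h ^ 2)) : ℝ) := by
    intro k
    rw [hf k 1]
    have e1 : (-2 * Complex.I * ((1:ℝ):ℂ) / (h:ℂ)^2) = -2 * Complex.I / (h:ℂ)^2 := by norm_num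
    have e2 : (2 * Complex.I * ((1:ℝ):ℂ) / (h:ℂ)^2) = 2 * Complex.I / (h:ℂ)^2 := by norm_num
    rw [e1]
    have hterm : ∀ m : ℤ, besselI m z / ((besselIR 0 (5 / (2 * h ^ 2)) : ℝ):ℂ) *
        besselI (k - m) (2 * Complex.I * ((1:ℝ):ℂ) / (h:ℂ)^2)
        = (besselI m z * besselI (k - m) (2 * Complex.I / (h:ℂ)^2))
            / ((besselIR 0 (5 / (2 * h ^ 2)) : ℝ):ℂ) := by
      intro m
      rw [e2]
      ring
    rw [tsum_congr hterm, tsum_div_const, besselI_add k z (2 * Complex.I / (h:ℂ)^2)]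
    have harg : z + 2 * Complex.I / (h:ℂ)^2 = 5 * Complex.I / (2 * (h:ℂ)^2) := by
      rw [hz]
      field_simp
      ring
    rw [harg]
    ring
  refine ⟨key1, fun k => ?_, fun k => ?_⟩
  · rw [hf k 0]
    have e0 : (-2 * Complex.I * ((0:ℝ):ℂ) / (h:ℂ)^2) = 0 := by norm_num
    have e0' : (2 * Complex.I * ((0:ℝ):ℂ) / (h:ℂ)^2) = 0 := by norm_num
    rw [e0, Complex.exp_zero, one_mul]
    have hsingle : ∑' m : ℤ, besselI m z / ((besselIR 0 (5 / (2 * h ^ 2)) : ℝ):ℂ) *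
        besselI (k - m) (2 * Complex.I * ((0:ℝ):ℂ) / (h:ℂ)^2)
        = besselI k z / ((besselIR 0 (5 / (2 * h ^ 2)) : ℝ):ℂ) := by
      rw [tsum_eq_single k]
      · rw [e0', sub_self, besselI_zero, if_pos rfl, mul_one]
      · intro m hm
        rw [e0', besselI_zero, if_neg (sub_ne_zero.mpr (Ne.symm hm)), mul_zero]
    rw [hsingle]
    rw [norm_div, Complex.norm_real, Real.norm_eq_abs, abs_of_pos hD]
    calc ‖besselI k z‖ / besselIR 0 (5 / (2 * h ^ 2))
        ≤ besselIR k (1 / (2 * h ^ 2)) / besselIR 0 (5 / (2 * h ^ 2)) := by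
          gcongr
          calc ‖besselI k z‖ = ‖besselI k z‖ := rfl
            _ ≤ besselIR k ‖z‖ := norm_besselI_le _ _
            _ = besselIR k (1/(2*h^2)) := by rw [hznorm]
      _ ≤ besselIR k (1 / (2 * h ^ 2)) / besselIR 0 (1 / (2 * h ^ 2)) := by
          gcongr
          · exact besselIR_nonneg _ _ (by positivity)
          · exact lt_of_lt_of_le one_pos (one_le_besselIR_zero _ (by positivity))
          · exact besselIR_zero_mono (by positivity) (by gcongr <;> norm_num)
  · rw [key1 k]
    rw [norm_div, norm_mul, Complex.norm_real, Real.norm_eq_abs, abs_of_pos hD]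
    have eI : (-2 * Complex.I / (h:ℂ)^2) = (((-2/h^2 : ℝ)):ℂ) * Complex.I := by
      push_cast
      ring
    rw [eI, Complex.norm_exp_ofReal_mul_I, one_mul]
    have h5 : ‖(5 * Complex.I / (2 * (h:ℂ)^2))‖ = 5 / (2 * h ^ 2) := by
      rw [show (2 * (h:ℂ)^2) = (((2 * h^2 : ℝ)):ℂ) by push_cast; ring,
        show ((5:ℂ) * Complex.I) = (((5:ℝ)):ℂ) * Complex.I by norm_num, norm_div, norm_mul,
        Complex.norm_I, Complex.norm_real, Complex.norm_real, Real.norm_eq_abs, Real.norm_eq_abs,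
        abs_of_pos hh2]
      norm_num
    gcongr
    calc ‖besselI k (5 * Complex.I / (2 * (h:ℂ)^2))‖
        = ‖besselI k (5 * Complex.I / (2 * (h:ℂ)^2))‖ := rfl
      _ ≤ besselIR k ‖(5 * Complex.I / (2 * (h:ℂ)^2))‖ := norm_besselI_le _ _
      _ = besselIR k (5 / (2 * h ^ 2)) := by rw [h5]
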